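/- Let T ⊆ N with |T| ≥ k, let π be a permutation of N, and let S ⊆ N with |S| = k. Then the per-permutation Shapley–Taylor value on the unanimity game satisfies: I_{S,π}(u_T) = 1 if S equals the set of the k elements of T that occur last in the ordering π (equivalently, S ⊆ T and every element of T∖S precedes every element of S in π), and I_{S,π}(u_T) = 0 otherwise. -/
import Mathlib


/-- Discrete derivative of a game `v` with respect to the set `S`, evaluated at `T`. -/
noncomputable def ddiff {n : ℕ} (S : Finset (Fin n)) (v : Finset (Fin n) → ℝ)
    (T : Finset (Fin n)) : ℝ :=
  ∑ W ∈ S.powerset, (-1 : ℝ) ^ (S.card - W.card) * v (W ∪ T)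

/-- The set `π^S` of players that precede every member of `S` in the ordering `π`
(player at position `p` is `π p`, so `i` precedes `j` iff `π.symm i < π.symm j`). -/
def preceders {n : ℕ} (π : Equiv.Perm (Fin n)) (S : Finset (Fin n)) : Finset (Fin n) :=
  Finset.univ.filter fun j => ∀ i ∈ S, π.symm j < π.symm i

/-- Per-permutation Shapley-Taylor value `I_{S,π}(v)` for order of explanation `k`. -/
noncomputable def stvPerm {n : ℕ} (k : ℕ) (S : Finset (Fin n)) (π : Equiv.Perm (Fin n))
    (v : Finset (Fin n) → ℝ) : ℝ :=
  if S.card < k then ddiff S v ∅ else ddiff S v (preceders π S)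

/-- The Shapley-Taylor interaction index `I_S(v)`: the average of `I_{S,π}(v)`
over all orderings `π`. -/
noncomputable def stv {n : ℕ} (k : ℕ) (S : Finset (Fin n)) (v : Finset (Fin n) → ℝ) : ℝ :=
  (1 / (Nat.factorial n : ℝ)) * ∑ π : Equiv.Perm (Fin n), stvPerm k S π v

/-- The unanimity game `u_T`: worth `1` exactly when all of `T` is present. -/
noncomputable def uGame {n : ℕ} (T : Finset (Fin n)) : Finset (Fin n) → ℝ :=
  fun S => if T ⊆ S then 1 else 0


open Finset in
lemma sum_pows_real {α : Type*} [DecidableEq α] (x : Finset α) :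
    (∑ m ∈ x.powerset, (-1 : ℝ) ^ m.card) = if x = ∅ then 1 else 0 := by
  have h := @Finset.sum_powerset_neg_one_pow_card α _ x
  have h2 : ((∑ m ∈ x.powerset, (-1 : ℤ) ^ m.card : ℤ) : ℝ) = ((if x = ∅ then 1 else 0 : ℤ) : ℝ) := by
    exact_mod_cast congrArg (fun z : ℤ => (z : ℝ)) h
  push_cast at h2
  convert h2 using 2

open Finset in
lemma key_alternating {α : Type*} [DecidableEq α] (S A : Finset α) :
    ∑ W ∈ S.powerset, (-1 : ℝ) ^ (S.card - W.card) * (if A ⊆ W then 1 else 0)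
      = if A = S then 1 else 0 := by
  by_cases hA : A ⊆ S
  · rw [← Finset.sum_filter_add_sum_filter_not S.powerset (fun W => A ⊆ W)]
    have h2 : ∑ W ∈ S.powerset.filter (fun W => ¬ A ⊆ W),
        (-1 : ℝ) ^ (S.card - W.card) * (if A ⊆ W then 1 else 0) = 0 := by
      apply Finset.sum_eq_zero; intro W hW
      simp only [mem_filter] at hW; simp [hW.2]
    rw [h2, add_zero]
    have h1 : ∑ W ∈ S.powerset.filter (fun W => A ⊆ W),
        (-1 : ℝ) ^ (S.card - W.card) * (if A ⊆ W then 1 else 0)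
        = ∑ U ∈ (S \ A).powerset, (-1 : ℝ) ^ U.card := by
      apply Finset.sum_nbij' (fun W => S \ W) (fun U => S \ U)
      · intro W hW
        simp only [mem_filter, mem_powerset] at hW ⊢
        exact sdiff_subset_sdiff (le_refl S) hW.2
      · intro U hU
        simp only [mem_filter, mem_powerset] at hU ⊢
        have hd : Disjoint U A := (subset_sdiff.mp hU).2
        exact ⟨sdiff_subset, subset_sdiff.mpr ⟨hA, hd.symm⟩⟩
      · intro W hW
        simp only [mem_filter, mem_powerset] at hW
        exact Finset.sdiff_sdiff_eq_self hW.1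
      · intro U hU
        simp only [mem_powerset] at hU
        exact Finset.sdiff_sdiff_eq_self (hU.trans sdiff_subset)
      · intro W hW
        simp only [mem_filter, mem_powerset] at hW
        rw [if_pos hW.2, mul_one, card_sdiff_of_subset hW.1]
    rw [h1, sum_pows_real]
    by_cases h : A = S
    · simp [h]
    · rw [if_neg h, if_neg]
      intro he
      exact h (subset_antisymm hA (sdiff_eq_empty_iff_subset.mp he))
  · rw [if_neg (fun h => hA (by rw [h])), Finset.sum_eq_zero]
    intro W hW
    rw [mem_powerset] at hW
    rw [if_neg (fun h => hA (h.trans hW)), mul_zero]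

/-- For `|T| ≥ k`, a permutation `π`, and `|S| = k`, the per-permutation
Shapley-Taylor value on the unanimity game `u_T` is `1` if `S` consists of the `k` elements
of `T` occurring last in `π` (i.e. `S ⊆ T` and every element of `T∖S` precedes every element
of `S` in `π`), and `0` otherwise. -/
theorem stvPerm_uGame {n k : ℕ} (hk1 : 1 ≤ k) (hkn : k ≤ n)
    (T : Finset (Fin n)) (hT : k ≤ T.card) (π : Equiv.Perm (Fin n))
    (S : Finset (Fin n)) (hS : S.card = k) :
    stvPerm k S π (uGame T) =
      if S ⊆ T ∧ ∀ i ∈ T \ S, ∀ j ∈ S, π.symm i < π.symm j then 1 else 0 := by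
  rw [stvPerm, if_neg (by omega)]
  set Q := preceders π S with hQ
  have hdd : ddiff S (uGame T) Q
      = ∑ W ∈ S.powerset, (-1 : ℝ) ^ (S.card - W.card) * (if T \ Q ⊆ W then 1 else 0) := by
    apply Finset.sum_congr rfl
    intro W _
    congr 1
    simp only [uGame]
    congr 1
    rw [eq_iff_iff]
    constructor
    · intro h x hx
      rw [Finset.mem_sdiff] at hx
      rcases Finset.mem_union.mp (h hx.1) with h1 | h1
      · exact h1
      · exact absurd h1 hx.2
    · intro h x hx
      by_cases hq : x ∈ Q
      · exact Finset.mem_union_right _ hq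
      · exact Finset.mem_union_left _ (h (Finset.mem_sdiff.mpr ⟨hx, hq⟩))
  rw [hdd, key_alternating]
  congr 1
  simp only [eq_iff_iff]
  constructor
  · intro h
    constructor
    · rw [← h]; exact Finset.sdiff_subset
    · intro i hi j hj
      rw [Finset.mem_sdiff] at hi
      have hiQ : i ∈ Q := by
        by_contra hQ'
        exact hi.2 (h ▸ Finset.mem_sdiff.mpr ⟨hi.1, hQ'⟩)
      rw [hQ, preceders, Finset.mem_filter] at hiQ
      exact hiQ.2 j hj
  · rintro ⟨hST, hcond⟩
    ext x
    rw [Finset.mem_sdiff]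
    constructor
    · rintro ⟨hxT, hxQ⟩
      by_contra hxS
      exact hxQ (by
        rw [hQ, preceders, Finset.mem_filter]
        exact ⟨Finset.mem_univ x, fun j hj => hcond x (Finset.mem_sdiff.mpr ⟨hxT, hxS⟩) j hj⟩)
    · intro hxS
      refine ⟨hST hxS, fun hxQ => ?_⟩
      rw [hQ, preceders, Finset.mem_filter] at hxQ
      exact lt_irrefl _ (hxQ.2 x hxS)
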